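/- Let V₁, V₂, V₃ be vector spaces with symmetric nondegenerate bilinear forms and let L₁ ⊆ V₁ ⊕ V̄₂, L₂ ⊆ V₂ ⊕ V̄₃ be lagrangian subspaces such that the map L₁ × L₂ → V₂, ((a,b),(c,d)) ↦ b − c, is surjective. Then dim(L₁ ×_{V₂} L₂) = dim(L₂ ∘ L₁), where L₁ ×_{V₂} L₂ = {((a,b),(b,d)) : (a,b) ∈ L₁, (b,d) ∈ L₂} and L₂ ∘ L₁ is the composed relation; equivalently, the projection L₁ ×_{V₂} L₂ → L₂ ∘ L₁ is a linear isomorphism. -/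
import Mathlib


/-- Under the transversality condition, the projection from the
fibred product L₁ ×_{V₂} L₂ onto the composed relation L₂ ∘ L₁ is a linear
isomorphism (injective and surjective onto the composition). -/
theorem stmt6 (V1 V2 V3 : Type*)
    [AddCommGroup V1] [Module ℝ V1] [FiniteDimensional ℝ V1]
    [AddCommGroup V2] [Module ℝ V2] [FiniteDimensional ℝ V2]
    [AddCommGroup V3] [Module ℝ V3] [FiniteDimensional ℝ V3]
    (B1 : V1 →ₗ[ℝ] V1 →ₗ[ℝ] ℝ) (h1s : ∀ x y, B1 x y = B1 y x)
    (h1nd : ∀ x, (∀ y, B1 x y = 0) → x = 0)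
    (B2 : V2 →ₗ[ℝ] V2 →ₗ[ℝ] ℝ) (h2s : ∀ x y, B2 x y = B2 y x)
    (h2nd : ∀ x, (∀ y, B2 x y = 0) → x = 0)
    (B3 : V3 →ₗ[ℝ] V3 →ₗ[ℝ] ℝ) (h3s : ∀ x y, B3 x y = B3 y x)
    (h3nd : ∀ x, (∀ y, B3 x y = 0) → x = 0)
    (L1 : Submodule ℝ (V1 × V2)) (L2 : Submodule ℝ (V2 × V3))
    (hL1 : ∀ p : V1 × V2, (∀ q ∈ L1, B1 p.1 q.1 - B2 p.2 q.2 = 0) ↔ p ∈ L1)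
    (hL2 : ∀ p : V2 × V3, (∀ q ∈ L2, B2 p.1 q.1 - B3 p.2 q.2 = 0) ↔ p ∈ L2)
    (htrans : ∀ v : V2, ∃ p ∈ L1, ∃ q ∈ L2, p.2 - q.1 = v) :
    -- the projection ((a,b),(b,d)) ↦ (a,d) is injective on L₁ ×_{V₂} L₂ ...
    (∀ p q : (V1 × V2) × (V2 × V3),
        p.1 ∈ L1 → p.2 ∈ L2 → p.1.2 = p.2.1 →
        q.1 ∈ L1 → q.2 ∈ L2 → q.1.2 = q.2.1 →
        (p.1.1, p.2.2) = (q.1.1, q.2.2) → p = q) ∧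
    -- ... and surjective onto L₂ ∘ L₁
    (∀ r : V1 × V3, (∃ b : V2, (r.1, b) ∈ L1 ∧ (b, r.2) ∈ L2) ↔
        ∃ p : (V1 × V2) × (V2 × V3),
          p.1 ∈ L1 ∧ p.2 ∈ L2 ∧ p.1.2 = p.2.1 ∧ (p.1.1, p.2.2) = r) := by
  constructor
  · rintro ⟨⟨a, b⟩, ⟨b', d⟩⟩ ⟨⟨a2, c⟩, ⟨c', d2⟩⟩ hp1 hp2 hpe hq1 hq2 hqe he
    simp only [Prod.mk.injEq] at hpe hqe he ⊢
    obtain ⟨ha, hd⟩ := he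
    subst hpe hqe ha hd
    have hL1d : ((0 : V1), b - c) ∈ L1 := by
      have := L1.sub_mem hp1 hq1
      simpa using this
    have hL2d : (b - c, (0 : V3)) ∈ L2 := by
      have := L2.sub_mem hp2 hq2
      simpa using this
    have hzero : ∀ v : V2, B2 (b - c) v = 0 := by
      intro v
      obtain ⟨p, hpL, q, hqL, hv⟩ := htrans v
      have h1 : B1 (0 : V1) p.1 - B2 (b - c) p.2 = 0 := ((hL1 _).mpr hL1d) p hpL
      have h2 : B2 (b - c) q.1 - B3 (0 : V3) q.2 = 0 := ((hL2 _).mpr hL2d) q hqL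
      simp only [map_zero, LinearMap.zero_apply, zero_sub, neg_eq_zero, sub_zero] at h1 h2
      calc B2 (b - c) v = B2 (b - c) (p.2 - q.1) := by rw [hv]
        _ = B2 (b - c) p.2 - B2 (b - c) q.1 := map_sub _ _ _
        _ = 0 := by rw [h1, h2, sub_zero]
    have hbc : b = c := sub_eq_zero.mp (h2nd _ hzero)
    simp [hbc]
  · intro r
    constructor
    · rintro ⟨b, hb1, hb2⟩
      exact ⟨((r.1, b), (b, r.2)), hb1, hb2, rfl, rfl⟩
    · rintro ⟨⟨⟨a, b⟩, ⟨b', d⟩⟩, h1, h2, he, hr⟩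
      simp only at he hr
      subst he hr
      exact ⟨b, h1, h2⟩
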